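/- Let U ⊆ ℂ⁴ be open with coordinates (a,b,q,r), and let p : U → ℂ be a holomorphic function with p(x) ≠ 0 and p² = q³ + aq + b at every point of U. Define vector fields on U by X_∞ = ∂/∂a − (r/p)·∂/∂q − ((r²(3q²+a) − qpr)/(2p³))·∂/∂r and Y_∞ = ∂/∂b + (r/(2p²))·∂/∂r, and define φ₁ = q + a·r/p and φ₂ = r/(2p). Then X_∞(φ₁) = X_∞(φ₂) = Y_∞(φ₁) = Y_∞(φ₂) = 0 identically on U, where a vector field Z acts on a function f by Z(f)(x) = Df(x)(Z(x)). -/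

import Mathlib

set_option maxHeartbeats 1600000 in
/-- The functions `φ₁ = q + ar/p` and `φ₂ = r/(2p)` are constant along the
`ε → ∞` isomonodromy flows `X_∞`, `Y_∞` of the deformed cubic oscillator of the
A₂-quiver Joyce structure: a vector field `Z` acts on a function `f` by
`Z(f)(x) = Df(x)(Z(x))`, and all four derivatives `X_∞(φᵢ)`, `Y_∞(φᵢ)` vanish.
Coordinates on `U ⊆ ℂ⁴` are `(a,b,q,r) = (x.1, x.2.1, x.2.2.1, x.2.2.2)`, and `p` is
holomorphic, nonvanishing, with `p² = q³ + aq + b` on `U`. -/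
theorem A2_twistor_coordinates_invariant (U : Set (ℂ × ℂ × ℂ × ℂ)) (hU : IsOpen U)
    (p : ℂ × ℂ × ℂ × ℂ → ℂ) (hp : DifferentiableOn ℂ p U)
    (hp0 : ∀ x ∈ U, p x ≠ 0)
    (hpsq : ∀ x ∈ U, p x ^ 2 = x.2.2.1 ^ 3 + x.1 * x.2.2.1 + x.2.1)
    (Xinf Yinf : ℂ × ℂ × ℂ × ℂ → ℂ × ℂ × ℂ × ℂ)
    (hX : ∀ y, Xinf y = (1, 0, -(y.2.2.2 / p y),
      -((y.2.2.2 ^ 2 * (3 * y.2.2.1 ^ 2 + y.1) - y.2.2.1 * p y * y.2.2.2) /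
          (2 * p y ^ 3))))
    (hY : ∀ y, Yinf y = (0, 1, 0, y.2.2.2 / (2 * p y ^ 2)))
    (φ₁ φ₂ : ℂ × ℂ × ℂ × ℂ → ℂ)
    (hφ₁ : ∀ y, φ₁ y = y.2.2.1 + y.1 * y.2.2.2 / p y)
    (hφ₂ : ∀ y, φ₂ y = y.2.2.2 / (2 * p y)) :
    ∀ x ∈ U,
      fderiv ℂ φ₁ x (Xinf x) = 0 ∧ fderiv ℂ φ₂ x (Xinf x) = 0 ∧
      fderiv ℂ φ₁ x (Yinf x) = 0 ∧ fderiv ℂ φ₂ x (Yinf x) = 0 := by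
  intro x hx
  have hmem : U ∈ nhds x := hU.mem_nhds hx
  have hpd : DifferentiableAt ℂ p x := hp.differentiableAt hmem
  have hP0 : p x ≠ 0 := hp0 x hx
  set L := fderiv ℂ p x with hL
  have hP : HasFDerivAt p L x := hpd.hasFDerivAt
  have hA : HasFDerivAt (fun y : ℂ × ℂ × ℂ × ℂ => y.1) (ContinuousLinearMap.fst ℂ ℂ (ℂ × ℂ × ℂ)) x := hasFDerivAt_fst
  have hS : HasFDerivAt (fun y : ℂ × ℂ × ℂ × ℂ => y.2) (ContinuousLinearMap.snd ℂ ℂ (ℂ × ℂ × ℂ)) x := hasFDerivAt_snd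
  have hB : HasFDerivAt (fun y : ℂ × ℂ × ℂ × ℂ => y.2.1) ((ContinuousLinearMap.fst ℂ ℂ (ℂ × ℂ)).comp (ContinuousLinearMap.snd ℂ ℂ (ℂ × ℂ × ℂ))) x :=
    hasFDerivAt_fst.comp x hS
  have hS2 : HasFDerivAt (fun y : ℂ × ℂ × ℂ × ℂ => y.2.2) ((ContinuousLinearMap.snd ℂ ℂ (ℂ × ℂ)).comp (ContinuousLinearMap.snd ℂ ℂ (ℂ × ℂ × ℂ))) x :=
    hasFDerivAt_snd.comp x hS
  have hQ : HasFDerivAt (fun y : ℂ × ℂ × ℂ × ℂ => y.2.2.1) ((ContinuousLinearMap.fst ℂ ℂ ℂ).comp ((ContinuousLinearMap.snd ℂ ℂ (ℂ × ℂ)).comp (ContinuousLinearMap.snd ℂ ℂ (ℂ × ℂ × ℂ)))) x :=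
    hasFDerivAt_fst.comp x hS2
  have hR : HasFDerivAt (fun y : ℂ × ℂ × ℂ × ℂ => y.2.2.2) ((ContinuousLinearMap.snd ℂ ℂ ℂ).comp ((ContinuousLinearMap.snd ℂ ℂ (ℂ × ℂ)).comp (ContinuousLinearMap.snd ℂ ℂ (ℂ × ℂ × ℂ)))) x :=
    hasFDerivAt_snd.comp x hS2
  -- the cubic
  have hg : HasFDerivAt (fun y : ℂ × ℂ × ℂ × ℂ => y.2.2.1 * y.2.2.1 * y.2.2.1 + y.1 * y.2.2.1 + y.2.1) _ x :=
    (((hQ.mul hQ).mul hQ).add (hA.mul hQ)).add hB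
  have hsq : HasFDerivAt (fun y => p y * p y) _ x := hP.mul hP
  have heq : (fun y => p y * p y) =ᶠ[nhds x] (fun y : ℂ × ℂ × ℂ × ℂ => y.2.2.1 * y.2.2.1 * y.2.2.1 + y.1 * y.2.2.1 + y.2.1) :=
    Filter.eventuallyEq_of_mem hmem (fun y hy => by have := hpsq y hy; ring_nf at this ⊢; linear_combination this)
  have hsq2 : HasFDerivAt (fun y => p y * p y) _ x := hg.congr_of_eventuallyEq heq
  have huniq := hsq.unique hsq2
  -- key relation for L applied to any v
  have key : ∀ v : ℂ × ℂ × ℂ × ℂ, 2 * p x * L v =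
      3 * x.2.2.1 ^ 2 * v.2.2.1 + (x.1 * v.2.2.1 + x.2.2.1 * v.1) + v.2.1 := by
    intro v
    have h2 := congrArg (fun (T : (ℂ × ℂ × ℂ × ℂ) →L[ℂ] ℂ) => T v) huniq
    simp [ContinuousLinearMap.smul_apply, ContinuousLinearMap.add_apply,
      ContinuousLinearMap.comp_apply, smul_eq_mul] at h2
    linear_combination h2
  -- derivative of φ₁
  have hInv : HasFDerivAt (fun y => (p y)⁻¹)
      ((-ContinuousLinearMap.mulLeftRight ℂ ℂ (p x)⁻¹ (p x)⁻¹).comp L) x :=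
    (hasFDerivAt_inv' hP0).comp x hP
  have hφ₁' := ((hQ.add ((hA.mul hR).mul hInv)).congr_of_eventuallyEq
    (Filter.Eventually.of_forall (p := fun y => φ₁ y = y.2.2.1 + y.1 * y.2.2.2 * (p y)⁻¹) (fun y => by simp only [hφ₁, div_eq_mul_inv])))
  have h2P0 : (2 : ℂ) * p x ≠ 0 := by simpa using hP0
  have hInv2 : HasFDerivAt (fun y => ((2:ℂ) * p y)⁻¹)
      ((-ContinuousLinearMap.mulLeftRight ℂ ℂ ((2:ℂ) * p x)⁻¹ ((2:ℂ) * p x)⁻¹).comp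
        (fderiv ℂ (fun y => (2:ℂ) * p y) x)) x :=
    (hasFDerivAt_inv' h2P0).comp x ((hpd.const_mul 2).hasFDerivAt)
  have hφ₂' := ((hR.mul hInv2).congr_of_eventuallyEq
    (Filter.Eventually.of_forall (p := fun y => φ₂ y = y.2.2.2 * ((2:ℂ) * p y)⁻¹) (fun y => by simp only [hφ₂, div_eq_mul_inv])))
  have e1 : ∀ v : ℂ × ℂ × ℂ × ℂ, fderiv ℂ φ₁ x v =
      v.2.2.1 + ((v.1 * x.2.2.2 + x.1 * v.2.2.2) * p x - x.1 * x.2.2.2 * L v) / (p x) ^ 2 := by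
    intro v
    rw [hφ₁'.fderiv]
    simp [ContinuousLinearMap.smul_apply, ContinuousLinearMap.add_apply, ContinuousLinearMap.sub_apply,
      ContinuousLinearMap.comp_apply, smul_eq_mul]
    field_simp
    ring
  have e2 : ∀ v : ℂ × ℂ × ℂ × ℂ, fderiv ℂ φ₂ x v =
      (v.2.2.2 * (2 * p x) - x.2.2.2 * (2 * L v)) / (2 * p x) ^ 2 := by
    intro v
    rw [hφ₂'.fderiv]
    have h2d : fderiv ℂ (fun y => (2:ℂ) * p y) x v = 2 * L v := by
      rw [fderiv_const_mul hpd]; simp; rfl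
    simp [ContinuousLinearMap.smul_apply, ContinuousLinearMap.add_apply, ContinuousLinearMap.sub_apply,
      ContinuousLinearMap.comp_apply, smul_eq_mul, h2d]
    field_simp
    ring
  have hX1 : (Xinf x).1 = 1 := by rw [hX]
  have hX2 : (Xinf x).2.1 = 0 := by rw [hX]
  have hX3 : (Xinf x).2.2.1 = -(x.2.2.2 / p x) := by rw [hX]
  have hX4 : (Xinf x).2.2.2 =
      -((x.2.2.2 ^ 2 * (3 * x.2.2.1 ^ 2 + x.1) - x.2.2.1 * p x * x.2.2.2) / (2 * p x ^ 3)) := by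
    rw [hX]
  have hY1 : (Yinf x).1 = 0 := by rw [hY]
  have hY2 : (Yinf x).2.1 = 1 := by rw [hY]
  have hY3 : (Yinf x).2.2.1 = 0 := by rw [hY]
  have hY4 : (Yinf x).2.2.2 = x.2.2.2 / (2 * p x ^ 2) := by rw [hY]
  have kX := key (Xinf x)
  have kY := key (Yinf x)
  rw [hX1, hX2, hX3] at kX
  rw [hY1, hY2, hY3] at kY
  have h2p2 : (2:ℂ) * p x ^ 2 ≠ 0 := by simp [hP0]
  have h2p : (2:ℂ) * p x ≠ 0 := by simp [hP0]
  have hcX : L (Xinf x) = (x.2.2.1 * p x - (3 * x.2.2.1 ^ 2 + x.1) * x.2.2.2) / (2 * p x ^ 2) := by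
    rw [eq_div_iff h2p2]
    apply mul_left_cancel₀ hP0
    field_simp at kX
    linear_combination p x * kX
  have hcY : L (Yinf x) = 1 / (2 * p x) := by
    rw [eq_div_iff h2p]
    field_simp at kY
    linear_combination kY
  refine ⟨?_, ?_, ?_, ?_⟩
  · rw [e1, hcX, hX1, hX3, hX4]; field_simp [hP0]; ring
  · rw [e2, hcX, hX4]; field_simp [hP0]; ring
  · rw [e1, hcY, hY1, hY3, hY4]; field_simp [hP0]; ring
  · rw [e2, hcY, hY4]; field_simp [hP0]; ring
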